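/- Given commuting derivations D_1,...,D_n of a commutative associative F-algebra A and a gl(n,F)-module V, the map π sending Σ_i a_i D_i ∈ W(n) to the operator Σ_{i,j} D_i(a_j) ⊗ E_{i,j} + Σ_i a_i D_i ⊗ Id_V on A ⊗_F V is a Lie algebra homomorphism, i.e., π([X,Y]) = [π(X), π(Y)] for all X, Y in the Lie algebra W(n) = {Σ a_i D_i | a_i ∈ A}. -/

import Mathlib

open TensorProduct

noncomputable section

variable (F : Type) [Field F] (n : ℕ)
variable (A : Type) [CommRing A] [Algebra F A]
variable (V : Type) [AddCommGroup V] [Module F V]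

/-- Standard matrix units E_{i,j} of gl(n,F). -/
def EE (i j : Fin n) : Matrix (Fin n) (Fin n) F := Matrix.single i j 1

/-- Shen's mixed product: the operator π(Σ a_i D_i) = Σ_{i,j} D_i(a_j) ⊗ E_{i,j} + Σ_i a_i D_i ⊗ Id
on A ⊗ V. -/
def mixedProduct (D : Fin n → Derivation F A A)
    (ρ : Matrix (Fin n) (Fin n) F →ₗ[F] Module.End F V) (a : Fin n → A) :
    Module.End F (A ⊗[F] V) :=
  (∑ i : Fin n, ∑ j : Fin n,
      TensorProduct.map (LinearMap.mulLeft F (D i (a j))) (ρ (EE F n i j))) +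
  ∑ i : Fin n,
      TensorProduct.map (LinearMap.mulLeft F (a i) ∘ₗ (D i).toLinearMap) LinearMap.id

/-! ### Auxiliary material -/

@[reducible] def endTensorLieRing : LieRing (Module.End F (A ⊗[F] V)) := LieRing.ofAssociativeRing

section Aux

/-- Generic: bracket with a finite sum on the right. -/
lemma my_lie_sum {L : Type*} [LieRing L] {ι : Type*} (s : Finset ι) (f : ι → L) (x : L) :
    ⁅x, ∑ i ∈ s, f i⁆ = ∑ i ∈ s, ⁅x, f i⁆ := by
  classical
  induction s using Finset.induction_on with
  | empty => simp
  | insert _ _ h ih => simp [Finset.sum_insert h, lie_add, ih]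

/-- Generic: bracket with a finite sum on the left. -/
lemma my_sum_lie {L : Type*} [LieRing L] {ι : Type*} (s : Finset ι) (f : ι → L) (x : L) :
    ⁅∑ i ∈ s, f i, x⁆ = ∑ i ∈ s, ⁅f i, x⁆ := by
  classical
  induction s using Finset.induction_on with
  | empty => simp
  | insert _ _ h ih => simp [Finset.sum_insert h, add_lie, ih]

variable (ρ : Matrix (Fin n) (Fin n) F →ₗ[F] Module.End F V)
variable (D : Fin n → Derivation F A A)

/-- The "matrix-unit" building block, linear in the coefficient. -/
def PmL (i j : Fin n) : A →ₗ[F] Module.End F (A ⊗[F] V) where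
  toFun u := TensorProduct.map (LinearMap.mulLeft F u) (ρ (EE F n i j))
  map_add' u v := by
    apply TensorProduct.ext'
    intro c x
    simp [TensorProduct.map_tmul, add_mul, TensorProduct.add_tmul]
  map_smul' r u := by
    apply TensorProduct.ext'
    intro c x
    simp [TensorProduct.map_tmul, Algebra.smul_mul_assoc, TensorProduct.smul_tmul']

/-- The "derivation" building block, linear in the coefficient. -/
def QmL (i : Fin n) : A →ₗ[F] Module.End F (A ⊗[F] V) where
  toFun u := TensorProduct.map (LinearMap.mulLeft F u ∘ₗ (D i).toLinearMap) LinearMap.id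
  map_add' u v := by
    apply TensorProduct.ext'
    intro c x
    simp [TensorProduct.map_tmul, add_mul, TensorProduct.add_tmul]
  map_smul' r u := by
    apply TensorProduct.ext'
    intro c x
    simp [TensorProduct.map_tmul, Algebra.smul_mul_assoc, TensorProduct.smul_tmul']

@[simp] lemma PmL_tmul (i j : Fin n) (u c : A) (x : V) :
    PmL F n A V ρ i j u (c ⊗ₜ[F] x) = (u * c) ⊗ₜ[F] (ρ (EE F n i j) x) := rfl

@[simp] lemma QmL_tmul (i : Fin n) (u c : A) (x : V) :
    QmL F n A V D i u (c ⊗ₜ[F] x) = (u * D i c) ⊗ₜ[F] x := rfl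

lemma mixedProduct_eq (a : Fin n → A) :
    mixedProduct F n A V D ρ a =
      (∑ i : Fin n, ∑ j : Fin n, PmL F n A V ρ i j (D i (a j))) +
      ∑ i : Fin n, QmL F n A V D i (a i) := rfl

lemma lie_QQ (hD : ∀ i j : Fin n, ⁅D i, D j⁆ = 0) (a b : A) (i k : Fin n) :
    ⁅QmL F n A V D i a, QmL F n A V D k b⁆ =
      QmL F n A V D k (a * D i b) - QmL F n A V D i (b * D k a) := by
  have hcomm : ∀ c : A, D i (D k c) = D k (D i c) := by
    intro c
    have h := congrArg (fun d : Derivation F A A => d c) (hD i k)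
    simpa [Derivation.commutator_apply, sub_eq_zero] using h
  rw [Ring.lie_def]
  apply TensorProduct.ext'
  intro c x
  simp only [LinearMap.sub_apply, Module.End.mul_apply, QmL_tmul, Derivation.leibniz,
    smul_eq_mul]
  rw [← TensorProduct.sub_tmul, ← TensorProduct.sub_tmul]
  congr 1
  rw [hcomm c]
  ring

lemma lie_QP (a v : A) (k i j : Fin n) :
    ⁅QmL F n A V D k a, PmL F n A V ρ i j v⁆ = PmL F n A V ρ i j (a * D k v) := by
  rw [Ring.lie_def]
  apply TensorProduct.ext'
  intro c x
  simp only [LinearMap.sub_apply, Module.End.mul_apply, QmL_tmul, PmL_tmul,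
    Derivation.leibniz, smul_eq_mul]
  rw [← TensorProduct.sub_tmul]
  congr 1
  ring

lemma lie_PQ (a v : A) (k i j : Fin n) :
    ⁅PmL F n A V ρ i j v, QmL F n A V D k a⁆ = -PmL F n A V ρ i j (a * D k v) := by
  letI := endTensorLieRing F A V
  rw [← lie_skew, lie_QP]

lemma EE_lie (i j k l : Fin n) :
    ⁅EE F n i j, EE F n k l⁆ =
      (if j = k then EE F n i l else 0) - (if l = i then EE F n k j else 0) := by
  rw [Ring.lie_def]
  unfold EE
  by_cases h1 : j = k <;> by_cases h2 : l = i <;>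
    simp [h1, h2, Matrix.single_mul_single_same, Matrix.single_mul_single_of_ne]

lemma lie_PP (hρ : ∀ X Y : Matrix (Fin n) (Fin n) F, ρ ⁅X, Y⁆ = ⁅ρ X, ρ Y⁆)
    (u v : A) (i j k l : Fin n) :
    ⁅PmL F n A V ρ i j u, PmL F n A V ρ k l v⁆ =
      (if j = k then PmL F n A V ρ i l (u * v) else 0) -
      (if l = i then PmL F n A V ρ k j (u * v) else 0) := by
  have key : ⁅ρ (EE F n i j), ρ (EE F n k l)⁆ =
      (if j = k then ρ (EE F n i l) else 0) - (if l = i then ρ (EE F n k j) else 0) := by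
    rw [← hρ, EE_lie]
    rw [map_sub]
    congr 1 <;> [skip; skip] <;> split <;> simp
  rw [Ring.lie_def]
  apply TensorProduct.ext'
  intro c x
  have keyx : ρ (EE F n i j) (ρ (EE F n k l) x) - ρ (EE F n k l) (ρ (EE F n i j) x) =
      (if j = k then ρ (EE F n i l) x else 0) - (if l = i then ρ (EE F n k j) x else 0) := by
    have := congrArg (fun f : Module.End F V => f x) key
    simpa [Ring.lie_def, apply_ite (fun f : Module.End F V => f x)] using this
  simp only [LinearMap.sub_apply, Module.End.mul_apply, PmL_tmul]
  have h1 : u * (v * c) = u * v * c := by ring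
  have h2 : v * (u * c) = u * v * c := by ring
  rw [h1, h2, ← TensorProduct.tmul_sub, keyx]
  simp [apply_ite (fun f : Module.End F V => f x), TensorProduct.tmul_sub,
    apply_ite (fun y : V => (u * v * c) ⊗ₜ[F] y)]
  split <;> split <;> simp [TensorProduct.tmul_sub]

lemma sum3_rot {M : Type*} [AddCommMonoid M] (f : Fin n → Fin n → Fin n → M) :
    ∑ k : Fin n, ∑ i : Fin n, ∑ j : Fin n, f i j k =
      ∑ i : Fin n, ∑ j : Fin n, ∑ k : Fin n, f i j k := by
  rw [Finset.sum_comm]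
  exact Finset.sum_congr rfl fun i _ => Finset.sum_comm

lemma sum3_swap {M : Type*} [AddCommMonoid M] (f : Fin n → Fin n → Fin n → M) :
    ∑ i : Fin n, ∑ j : Fin n, ∑ k : Fin n, f i j k =
      ∑ i : Fin n, ∑ j : Fin n, ∑ k : Fin n, f k j i := by
  calc ∑ i : Fin n, ∑ j : Fin n, ∑ k : Fin n, f i j k
      = ∑ i : Fin n, ∑ k : Fin n, ∑ j : Fin n, f i j k :=
        Finset.sum_congr rfl fun i _ => Finset.sum_comm
    _ = ∑ k : Fin n, ∑ i : Fin n, ∑ j : Fin n, f i j k := Finset.sum_comm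
    _ = ∑ k : Fin n, ∑ j : Fin n, ∑ i : Fin n, f i j k :=
        Finset.sum_congr rfl fun k _ => Finset.sum_comm

lemma collapseA {M : Type*} [AddCommMonoid M] (f : Fin n → Fin n → M) (x1 : Fin n) :
    ∑ x2 : Fin n, ∑ x3 : Fin n, (if x1 = x2 then f x2 x3 else 0) = ∑ x3 : Fin n, f x1 x3 := by
  rw [Finset.sum_comm]
  simp

end Aux

set_option maxHeartbeats 2000000 in
/-- Shen's mixed product is a Lie algebra homomorphism from W(n) = {Σ a_i D_i}
(with bracket (1.5)) to End(A ⊗ V): π([X,Y]) = [π(X), π(Y)]. -/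
theorem mixedProduct_is_lie_hom [CharZero F]
    (D : Fin n → Derivation F A A)
    (hD : ∀ i j : Fin n, ⁅D i, D j⁆ = 0)
    (ρ : Matrix (Fin n) (Fin n) F →ₗ[F] Module.End F V)
    (hρ : ∀ X Y : Matrix (Fin n) (Fin n) F, ρ ⁅X, Y⁆ = ⁅ρ X, ρ Y⁆)
    (a b : Fin n → A) :
    mixedProduct F n A V D ρ (fun i => ∑ j : Fin n, (a j * D j (b i) - b j * D j (a i))) =
      ⁅mixedProduct F n A V D ρ a, mixedProduct F n A V D ρ b⁆ := by
  classical
  letI := endTensorLieRing F A V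
  rw [mixedProduct_eq, mixedProduct_eq, mixedProduct_eq]
  have hPP : ⁅∑ i : Fin n, ∑ j : Fin n, PmL F n A V ρ i j (D i (a j)),
      ∑ i : Fin n, ∑ j : Fin n, PmL F n A V ρ i j (D i (b j))⁆ =
      (∑ i : Fin n, ∑ j : Fin n, ∑ k : Fin n, PmL F n A V ρ i j (D i (a k) * D k (b j))) -
      ∑ i : Fin n, ∑ j : Fin n, ∑ k : Fin n, PmL F n A V ρ i j (D i (b k) * D k (a j)) := by
    simp only [my_sum_lie, my_lie_sum, lie_PP F n A V ρ hρ]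
    simp only [Finset.sum_sub_distrib]
    congr 1
    · simp only [Finset.sum_ite_eq', Finset.mem_univ, ite_true]
      exact sum3_swap n (fun x x1 x2 => PmL F n A V ρ x2 x1 (D x2 (a x) * D x (b x1)))
    · simp only [collapseA]
      refine Finset.sum_congr rfl fun x _ => ?_
      rw [Finset.sum_comm]
      exact Finset.sum_congr rfl fun j _ => Finset.sum_congr rfl fun k _ => by rw [mul_comm]
  have hQP : ⁅∑ i : Fin n, QmL F n A V D i (a i),
      ∑ i : Fin n, ∑ j : Fin n, PmL F n A V ρ i j (D i (b j))⁆ =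
      ∑ i : Fin n, ∑ j : Fin n, ∑ k : Fin n,
        PmL F n A V ρ i j (a k * D i (D k (b j))) := by
    simp only [my_sum_lie, my_lie_sum, lie_QP]
    refine Finset.sum_congr rfl fun i _ => Finset.sum_congr rfl fun j _ =>
      Finset.sum_congr rfl fun k _ => ?_
    have hcomm : D k (D i (b j)) = D i (D k (b j)) := by
      have h := congrArg (fun d : Derivation F A A => d (b j)) (hD k i)
      simpa [Derivation.commutator_apply, sub_eq_zero] using h
    rw [hcomm]
  have hPQ : ⁅∑ i : Fin n, ∑ j : Fin n, PmL F n A V ρ i j (D i (a j)),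
      ∑ i : Fin n, QmL F n A V D i (b i)⁆ =
      -∑ i : Fin n, ∑ j : Fin n, ∑ k : Fin n,
        PmL F n A V ρ i j (b k * D i (D k (a j))) := by
    simp only [my_sum_lie, my_lie_sum, lie_PQ]
    simp only [Finset.sum_neg_distrib]
    congr 1
    refine Eq.trans (sum3_rot n (fun i j k => PmL F n A V ρ i j (b k * D k (D i (a j))))) ?_
    refine Finset.sum_congr rfl fun i _ => Finset.sum_congr rfl fun j _ =>
      Finset.sum_congr rfl fun k _ => ?_
    have hcomm : D k (D i (a j)) = D i (D k (a j)) := by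
      have h := congrArg (fun d : Derivation F A A => d (a j)) (hD k i)
      simpa [Derivation.commutator_apply, sub_eq_zero] using h
    rw [hcomm]
  have hQQ : ⁅∑ i : Fin n, QmL F n A V D i (a i),
      ∑ i : Fin n, QmL F n A V D i (b i)⁆ =
      (∑ i : Fin n, ∑ k : Fin n, QmL F n A V D i (a k * D k (b i))) -
      ∑ i : Fin n, ∑ k : Fin n, QmL F n A V D i (b k * D k (a i)) := by
    simp only [my_sum_lie, my_lie_sum, lie_QQ F n A V D hD]
    simp only [Finset.sum_sub_distrib]
    congr 1
    exact Finset.sum_comm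
  rw [lie_add, add_lie, add_lie, hPP, hQP, hPQ, hQQ]
  simp only [map_sum, map_sub, Derivation.leibniz, smul_eq_mul, map_add,
    Finset.sum_add_distrib, Finset.sum_sub_distrib]
  have e1 : ∑ x : Fin n, ∑ x1 : Fin n, ∑ x2 : Fin n,
        PmL F n A V ρ x x1 (D x2 (b x1) * D x (a x2)) =
      ∑ i : Fin n, ∑ j : Fin n, ∑ k : Fin n,
        PmL F n A V ρ i j (D i (a k) * D k (b j)) :=
    Finset.sum_congr rfl fun i _ => Finset.sum_congr rfl fun j _ =>
      Finset.sum_congr rfl fun k _ => by rw [mul_comm]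
  have e2 : ∑ x : Fin n, ∑ x1 : Fin n, ∑ x2 : Fin n,
        PmL F n A V ρ x x1 (D x2 (a x1) * D x (b x2)) =
      ∑ i : Fin n, ∑ j : Fin n, ∑ k : Fin n,
        PmL F n A V ρ i j (D i (b k) * D k (a j)) :=
    Finset.sum_congr rfl fun i _ => Finset.sum_congr rfl fun j _ =>
      Finset.sum_congr rfl fun k _ => by rw [mul_comm]
  rw [e1, e2]
  abel


end
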